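/- Suppose y : [0,T) → ℝ is nonnegative, differentiable, y(0) = y₀ > 0, and satisfies y'(t) ≤ C·(1 + g(t)·(1 + log(1 + y(t))))·y(t) where g : [0,T) → ℝ is continuous, nonnegative, and ∫₀^T g(s) ds = M < ∞. Then y is bounded on [0,T); in fact y(t) ≤ y₀ · exp[C₁ exp(C₂ ∫₀ᵗ g(τ) dτ)] for constants C₁, C₂ depending only on C, M, y₀. -/
import Mathlib


open Set

theorem log_gronwall_bkm (T C M y₀ : ℝ) (hT : 0 < T) (hC : 0 < C) (hy₀ : 0 < y₀)
    (g y : ℝ → ℝ) (hy0 : y 0 = y₀)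
    (hgcont : Continuous g) (hgpos : ∀ t, 0 ≤ g t)
    (hM : (∫ s in (0:ℝ)..T, g s) = M)
    (hypos : ∀ t ∈ Ico (0:ℝ) T, 0 ≤ y t)
    (hdiff : ∀ t ∈ Ico (0:ℝ) T, DifferentiableAt ℝ y t)
    (hineq : ∀ t ∈ Ico (0:ℝ) T,
      deriv y t ≤ C * (1 + g t * (1 + Real.log (1 + y t))) * y t) :
    ∃ C₁ C₂ : ℝ, 0 < C₁ ∧ 0 < C₂ ∧
      ∀ t ∈ Ico (0:ℝ) T,
        y t ≤ y₀ * Real.exp (C₁ * Real.exp (C₂ * ∫ s in (0:ℝ)..t, g s)) := by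
  -- bound g on [0, T]
  obtain ⟨K0, hK0⟩ := (isCompact_Icc.image hgcont).bddAbove
  set K : ℝ := max K0 0 with hKdef
  have hK : ∀ s ∈ Icc (0:ℝ) T, g s ≤ K := fun s hs =>
    le_trans (hK0 ⟨s, hs, rfl⟩) (le_max_left _ _)
  have hKnn : 0 ≤ K := le_max_right _ _
  set a : ℝ := C * (1 + K) with hadef
  have ha : 0 < a := mul_pos hC (by linarith)
  set δ : ℝ := Real.log (1 + y₀) with hδdef
  have hδpos : 0 < δ := Real.log_pos (by linarith)
  set u : ℝ → ℝ := fun s => Real.log (1 + y s) with hudef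
  set B : ℝ := (δ + 1) * Real.exp (a * T) with hBdef
  have hBpos : 0 < B := mul_pos (by linarith) (Real.exp_pos _)
  -- key boundedness claim
  have key : ∀ t ∈ Ico (0:ℝ) T, y t ≤ Real.exp B := by
    intro t ht
    obtain ⟨ht0, htT⟩ := ht
    have hsub : Icc (0:ℝ) t ⊆ Ico (0:ℝ) T := fun s hs => ⟨hs.1, lt_of_le_of_lt hs.2 htT⟩
    have hpos1y : ∀ s ∈ Ico (0:ℝ) T, (0:ℝ) < 1 + y s := fun s hs => by
      have := hypos s hs; linarith
    have hud : ∀ s ∈ Ico (0:ℝ) T, HasDerivAt u (deriv y s / (1 + y s)) s := by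
      intro s hs
      exact (((hdiff s hs).hasDerivAt).const_add 1).log (ne_of_gt (hpos1y s hs))
    -- Gronwall on [0, t]
    have hgr := le_gronwallBound_of_liminf_deriv_right_le
      (f := u) (f' := fun s => deriv y s / (1 + y s)) (δ := δ) (K := a) (ε := a)
      (a := 0) (b := t)
      (fun s hs => ((hud s (hsub hs)).continuousAt).continuousWithinAt)
      (by
        intro x hx r hr
        have hx' : x ∈ Ico (0:ℝ) T := hsub ⟨hx.1, le_of_lt hx.2⟩
        have htend := hasDerivAt_iff_tendsto_slope.mp (hud x hx')
        have htend' : Filter.Tendsto (slope u x) (nhdsWithin x (Ioi x))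
            (nhds (deriv y x / (1 + y x))) :=
          htend.mono_left (nhdsWithin_mono x fun z hz => ne_of_gt hz)
        have hev := htend'.eventually (gt_mem_nhds hr)
        refine hev.frequently.mono fun z hz => ?_
        rwa [slope_def_field, div_eq_inv_mul] at hz)
      (by
        simp only [hudef, hy0]
        exact le_of_eq rfl)
      (by
        intro x hx
        have hx' : x ∈ Ico (0:ℝ) T := hsub ⟨hx.1, le_of_lt hx.2⟩
        have hy1 : (0:ℝ) < 1 + y x := hpos1y x hx'
        have hyn : 0 ≤ y x := hypos x hx'
        have hun : 0 ≤ u x := Real.log_nonneg (by linarith)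
        have hgK : g x ≤ K := hK x ⟨hx'.1, le_of_lt (lt_of_lt_of_le hx'.2 le_rfl)⟩
        have hb := hineq x hx'
        have hgx := hgpos x
        rw [div_le_iff₀ hy1]
        have h1 : C * (1 + g x * (1 + Real.log (1 + y x))) * y x
            ≤ (a * u x + a) * (1 + y x) := by
          have hux : u x = Real.log (1 + y x) := rfl
          rw [← hux]
          have h1K : (0:ℝ) ≤ 1 + K - g x := by linarith
          rw [hadef]
          nlinarith [mul_nonneg (mul_nonneg (mul_nonneg hC.le hun) hyn) h1K,
            mul_nonneg (mul_nonneg hC.le hyn) (sub_nonneg.mpr hgK),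
            mul_nonneg hC.le hun,
            mul_nonneg (mul_nonneg hC.le hKnn) hun,
            mul_nonneg hC.le hKnn]
        linarith)
      t ⟨ht0, le_rfl⟩
    have hub : u t ≤ B := by
      have h2 : gronwallBound δ a a (t - 0) = δ * Real.exp (a * (t - 0))
          + a / a * (Real.exp (a * (t - 0)) - 1) := by
        rw [gronwallBound_of_K_ne_0 (ne_of_gt ha)]
      rw [h2, div_self (ne_of_gt ha), sub_zero, one_mul] at hgr
      have hexp : Real.exp (a * t) ≤ Real.exp (a * T) :=
        Real.exp_le_exp.mpr (by nlinarith)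
      nlinarith [Real.exp_pos (a * t)]
    have h1y : (0:ℝ) < 1 + y t := hpos1y t ⟨ht0, htT⟩
    have : 1 + y t = Real.exp (u t) := (Real.exp_log h1y).symm
    have := Real.exp_le_exp.mpr hub
    linarith
  -- choose constants
  refine ⟨B + 1 + |Real.log y₀|, 1, by positivity, one_pos, ?_⟩
  intro t ht
  have hG : 0 ≤ ∫ s in (0:ℝ)..t, g s :=
    intervalIntegral.integral_nonneg ht.1 (fun s _ => hgpos s)
  have hC₁pos : (0:ℝ) < B + 1 + |Real.log y₀| := by positivity
  have h1 : B + 1 + |Real.log y₀| ≤ (B + 1 + |Real.log y₀|) * Real.exp (1 * ∫ s in (0:ℝ)..t, g s) := by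
    have : (1:ℝ) ≤ Real.exp (1 * ∫ s in (0:ℝ)..t, g s) := by
      rw [one_mul]; exact Real.one_le_exp hG
    nlinarith
  have h2 : Real.exp B ≤ y₀ * Real.exp (B + 1 + |Real.log y₀|) := by
    have : Real.exp B ≤ Real.exp (Real.log y₀ + (B + 1 + |Real.log y₀|)) := by
      apply Real.exp_le_exp.mpr
      have := abs_nonneg (Real.log y₀)
      have := neg_abs_le (Real.log y₀)
      linarith
    rwa [Real.exp_add, Real.exp_log hy₀] at this
  calc y t ≤ Real.exp B := key t ht
    _ ≤ y₀ * Real.exp (B + 1 + |Real.log y₀|) := h2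
    _ ≤ y₀ * Real.exp ((B + 1 + |Real.log y₀|) * Real.exp (1 * ∫ s in (0:ℝ)..t, g s)) := by
        apply mul_le_mul_of_nonneg_left _ hy₀.le
        exact Real.exp_le_exp.mpr h1
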